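/- The tri-diagonal block precision matrix κ of a Gaussian chain is positive definite: for blocks κ_{ii} = Σᵢ + W_{i+1}ᵀΣ_{i+1}W_{i+1} for 0 ≤ i ≤ d-1, κ_{dd} = Σ_d, κ_{i,i+1} = -(Σ_{i+1}W_{i+1})ᵀ, κ_{i+1,i} = -(Σ_{i+1}W_{i+1}), and all other blocks zero, the quadratic form equals Σ_{i} appropriate sums of squares and vanishes only at zero. -/

import Mathlib

open Matrix Finset

private lemma mulVec_dot' {m p : ℕ} (B : Matrix (Fin m) (Fin p) ℝ) (a : Fin p → ℝ)
    (w : Fin m → ℝ) : (B *ᵥ a) ⬝ᵥ w = a ⬝ᵥ (Bᵀ *ᵥ w) := by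
  rw [dotProduct_mulVec, vecMul_transpose]

private lemma key_term' {m p : ℕ} (A : Matrix (Fin m) (Fin m) ℝ) (hA : Aᵀ = A)
    (B : Matrix (Fin m) (Fin p) ℝ) (a : Fin p → ℝ) (b : Fin m → ℝ) :
    b ⬝ᵥ (A *ᵥ b) + a ⬝ᵥ ((Bᵀ * A * B) *ᵥ a) + (a ⬝ᵥ ((-(A * B))ᵀ *ᵥ b)
      + b ⬝ᵥ ((-(A * B)) *ᵥ a)) =
    (b - B *ᵥ a) ⬝ᵥ (A *ᵥ (b - B *ᵥ a)) := by
  have h1 : a ⬝ᵥ ((Bᵀ * A * B) *ᵥ a) = (B *ᵥ a) ⬝ᵥ (A *ᵥ (B *ᵥ a)) := by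
    rw [mulVec_dot', ← mulVec_mulVec, ← mulVec_mulVec]
  have h2 : a ⬝ᵥ ((-(A * B))ᵀ *ᵥ b) = -((B *ᵥ a) ⬝ᵥ (A *ᵥ b)) := by
    rw [transpose_neg, transpose_mul, hA, neg_mulVec, dotProduct_neg, mulVec_dot',
      ← mulVec_mulVec]
  have h3 : b ⬝ᵥ ((-(A * B)) *ᵥ a) = -(b ⬝ᵥ (A *ᵥ (B *ᵥ a))) := by
    rw [neg_mulVec, dotProduct_neg, ← mulVec_mulVec]
  rw [h1, h2, h3, sub_dotProduct, mulVec_sub, dotProduct_sub, dotProduct_sub]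
  ring

private lemma dot_expand' {m p : ℕ} (v : Fin m → ℝ) (M : Matrix (Fin m) (Fin p) ℝ)
    (w : Fin p → ℝ) : v ⬝ᵥ (M *ᵥ w) = ∑ a, ∑ b, v a * (M a b * w b) := by
  simp [dotProduct, mulVec, Finset.mul_sum]

theorem triDiagonalBlockPrecision_posDef
    (d : ℕ) (n : ℕ → ℕ)
    (S : (i : ℕ) → Matrix (Fin (n i)) (Fin (n i)) ℝ)
    (W : (i : ℕ) → Matrix (Fin (n (i + 1))) (Fin (n i)) ℝ)
    (hS : ∀ i, i ≤ d → (S i).PosDef)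
    (κ : Matrix ((i : Fin (d + 1)) × Fin (n i)) ((i : Fin (d + 1)) × Fin (n i)) ℝ)
    (hdiag : ∀ (i : Fin (d + 1)), (i : ℕ) < d → ∀ (a b : Fin (n i)),
      κ ⟨i, a⟩ ⟨i, b⟩ = (S i + (W i)ᵀ * S ((i : ℕ) + 1) * W i) a b)
    (hlast : ∀ (i : Fin (d + 1)) (hi : (i : ℕ) = d), ∀ (a b : Fin (n i)),
      κ ⟨i, a⟩ ⟨i, b⟩ =
        S d (Fin.cast (congrArg n hi) a) (Fin.cast (congrArg n hi) b))
    (hsupper : ∀ (i j : Fin (d + 1)) (hij : (j : ℕ) = (i : ℕ) + 1),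
      ∀ (a : Fin (n i)) (b : Fin (n j)),
      κ ⟨i, a⟩ ⟨j, b⟩ = (-(S ((i : ℕ) + 1) * W i))ᵀ a (Fin.cast (congrArg n hij) b))
    (hslower : ∀ (i j : Fin (d + 1)) (hij : (j : ℕ) = (i : ℕ) + 1),
      ∀ (a : Fin (n i)) (b : Fin (n j)),
      κ ⟨j, b⟩ ⟨i, a⟩ = (-(S ((i : ℕ) + 1) * W i)) (Fin.cast (congrArg n hij) b) a)
    (hzero : ∀ (i j : Fin (d + 1)), (i : ℕ) ≠ (j : ℕ) → (j : ℕ) ≠ (i : ℕ) + 1 →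
      (i : ℕ) ≠ (j : ℕ) + 1 → ∀ (a : Fin (n i)) (b : Fin (n j)), κ ⟨i, a⟩ ⟨j, b⟩ = 0) :
    κ.PosDef := by
  classical
  have hSsymm : ∀ k, k ≤ d → (S k)ᵀ = S k := by
    intro k hk
    exact (by simpa [conjTranspose] using (hS k hk).1 : (S k).IsSymm).eq
  rw [posDef_iff_dotProduct_mulVec]
  constructor
  · -- Hermitian
    ext ⟨i, a⟩ ⟨j, b⟩
    rw [conjTranspose_apply, star_trivial]
    by_cases h1 : (j : ℕ) = (i : ℕ)
    · have hji : j = i := Fin.ext h1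
      subst hji
      by_cases h2 : (j : ℕ) < d
      · rw [hdiag j h2 b a, hdiag j h2 a b]
        have : (S (j : ℕ) + (W (j : ℕ))ᵀ * S ((j : ℕ) + 1) * W (j : ℕ))ᵀ
            = S (j : ℕ) + (W (j : ℕ))ᵀ * S ((j : ℕ) + 1) * W (j : ℕ) := by
          rw [transpose_add, transpose_mul, transpose_mul, transpose_transpose,
            hSsymm _ (by omega), hSsymm _ (by omega), ← Matrix.mul_assoc]
        conv_rhs => rw [← this]
        rfl
      · have hjd : (j : ℕ) = d := by have := j.isLt; omega
        rw [hlast j hjd b a, hlast j hjd a b]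
        conv_rhs => rw [← hSsymm d le_rfl]
        rfl
    · by_cases h2 : (i : ℕ) = (j : ℕ) + 1
      · rw [hsupper j i h2 b a, hslower j i h2 b a]
        rfl
      · by_cases h3 : (j : ℕ) = (i : ℕ) + 1
        · rw [hsupper i j h3 a b, hslower i j h3 a b]
          rfl
        · rw [hzero j i h1 h2 (by omega) b a, hzero i j (by omega) h3 h2 a b]
  · -- positivity
    intro x hx
    have hstar : star x = x := funext fun p => star_trivial _
    rw [hstar]
    set u : (k : ℕ) → Fin (n k) → ℝ :=
      fun k => if h : k < d + 1 then (fun a => x ⟨⟨k, h⟩, a⟩) else 0 with hu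
    have hxu : ∀ (i : Fin (d + 1)) (a : Fin (n (i : ℕ))), x ⟨i, a⟩ = u (i : ℕ) a := by
      intro i a
      rw [hu]
      simp only [dif_pos i.isLt]
    set T : Fin (d + 1) → Fin (d + 1) → ℝ :=
      fun i j => ∑ a, ∑ b, x ⟨i, a⟩ * (κ ⟨i, a⟩ ⟨j, b⟩ * x ⟨j, b⟩) with hT
    have hQ : x ⬝ᵥ (κ *ᵥ x) = ∑ i, ∑ j, T i j := by
      calc x ⬝ᵥ (κ *ᵥ x)
          = ∑ p : (i : Fin (d + 1)) × Fin (n (i : ℕ)),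
              ∑ q : (i : Fin (d + 1)) × Fin (n (i : ℕ)), x p * (κ p q * x q) := by
            simp [dotProduct, mulVec, Finset.mul_sum]
        _ = ∑ i, ∑ a, ∑ j, ∑ b, x ⟨i, a⟩ * (κ ⟨i, a⟩ ⟨j, b⟩ * x ⟨j, b⟩) := by
            rw [← Finset.univ_sigma_univ, Finset.sum_sigma]
            refine Finset.sum_congr rfl fun i _ => Finset.sum_congr rfl fun a _ => ?_
            rw [Finset.sum_sigma]
        _ = ∑ i, ∑ j, T i j := by
            refine Finset.sum_congr rfl fun i _ => ?_
            rw [Finset.sum_comm]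
    have hd1 : d < d + 1 := by omega
    have hT0 : ∀ i j : Fin (d + 1), (i : ℕ) ≠ (j : ℕ) → (j : ℕ) ≠ (i : ℕ) + 1 →
        (i : ℕ) ≠ (j : ℕ) + 1 → T i j = 0 := by
      intro i j h1 h2 h3
      simp only [hT]
      refine Finset.sum_eq_zero fun a _ => Finset.sum_eq_zero fun b _ => ?_
      rw [hzero i j h1 h2 h3 a b]
      ring
    have hTdiag : ∀ (k : ℕ) (h : k < d), T ⟨k, by omega⟩ ⟨k, by omega⟩
        = u k ⬝ᵥ ((S k + (W k)ᵀ * S (k + 1) * W k) *ᵥ u k) := by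
      intro k h
      simp only [hT]
      rw [dot_expand']
      refine Finset.sum_congr rfl fun a _ => Finset.sum_congr rfl fun b _ => ?_
      rw [hdiag ⟨k, by omega⟩ h a b, hxu ⟨k, by omega⟩ a, hxu ⟨k, by omega⟩ b]
    have hTlast : T ⟨d, hd1⟩ ⟨d, hd1⟩ = u d ⬝ᵥ (S d *ᵥ u d) := by
      simp only [hT]
      rw [dot_expand']
      refine Finset.sum_congr rfl fun a _ => Finset.sum_congr rfl fun b _ => ?_
      rw [hlast ⟨d, hd1⟩ rfl a b, hxu ⟨d, hd1⟩ a, hxu ⟨d, hd1⟩ b]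
      rfl
    have hTup : ∀ (k : ℕ) (h : k < d), T ⟨k, by omega⟩ ⟨k + 1, by omega⟩
        = u k ⬝ᵥ ((-(S (k + 1) * W k))ᵀ *ᵥ u (k + 1)) := by
      intro k h
      simp only [hT]
      rw [dot_expand']
      refine Finset.sum_congr rfl fun a _ => Finset.sum_congr rfl fun b _ => ?_
      rw [hsupper ⟨k, by omega⟩ ⟨k + 1, by omega⟩ rfl a b,
        hxu ⟨k, by omega⟩ a, hxu ⟨k + 1, by omega⟩ b]
      rfl
    have hTlow : ∀ (k : ℕ) (h : k < d), T ⟨k + 1, by omega⟩ ⟨k, by omega⟩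
        = u (k + 1) ⬝ᵥ ((-(S (k + 1) * W k)) *ᵥ u k) := by
      intro k h
      simp only [hT]
      rw [dot_expand']
      refine Finset.sum_congr rfl fun a _ => Finset.sum_congr rfl fun b _ => ?_
      rw [hslower ⟨k, by omega⟩ ⟨k + 1, by omega⟩ rfl b a,
        hxu ⟨k, by omega⟩ b, hxu ⟨k + 1, by omega⟩ a]
      rfl
    have hsplit : ∀ i j : Fin (d + 1), T i j = (if j = i then T i j else 0) +
        ((if (j : ℕ) = (i : ℕ) + 1 then T i j else 0) +
          (if (i : ℕ) = (j : ℕ) + 1 then T i j else 0)) := by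
      intro i j
      by_cases h1 : j = i
      · subst h1
        have e2 : ¬((j : ℕ) = (j : ℕ) + 1) := by omega
        rw [if_pos rfl, if_neg e2]
        ring
      · have h1' : (j : ℕ) ≠ (i : ℕ) := fun h => h1 (Fin.ext h)
        by_cases h2 : (j : ℕ) = (i : ℕ) + 1
        · have h3 : ¬((i : ℕ) = (j : ℕ) + 1) := by omega
          rw [if_neg h1, if_pos h2, if_neg h3]
          ring
        · by_cases h3 : (i : ℕ) = (j : ℕ) + 1
          · rw [if_neg h1, if_neg h2, if_pos h3]
            ring
          · rw [hT0 i j (Ne.symm h1') h2 h3, if_neg h1, if_neg h2, if_neg h3]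
            ring
    have hinner1 : ∀ i : Fin (d + 1), (∑ j : Fin (d + 1), if j = i then T i j else 0) = T i i := by
      intro i
      simp
    have hinner2 : ∀ i : Fin (d + 1), (∑ j : Fin (d + 1), if (j : ℕ) = (i : ℕ) + 1 then T i j else 0)
        = if _h : (i : ℕ) < d then T i ⟨(i : ℕ) + 1, by omega⟩ else 0 := by
      intro i
      by_cases h : (i : ℕ) < d
      · rw [dif_pos h, Finset.sum_eq_single (⟨(i : ℕ) + 1, by omega⟩ : Fin (d + 1))]
        · rw [if_pos rfl]
        · intro j _ hj
          rw [if_neg]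
          intro hc
          exact hj (Fin.ext hc)
        · intro hmem
          exact absurd (Finset.mem_univ _) hmem
      · rw [dif_neg h]
        refine Finset.sum_eq_zero fun j _ => ?_
        rw [if_neg]
        have := j.isLt
        omega
    have hinner3 : ∀ i : Fin (d + 1), (∑ j : Fin (d + 1), if (i : ℕ) = (j : ℕ) + 1 then T i j else 0)
        = if _h : 0 < (i : ℕ) then T i ⟨(i : ℕ) - 1, by omega⟩ else 0 := by
      intro i
      by_cases h : 0 < (i : ℕ)
      · rw [dif_pos h, Finset.sum_eq_single (⟨(i : ℕ) - 1, by omega⟩ : Fin (d + 1))]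
        · rw [if_pos (by show (i : ℕ) = (i : ℕ) - 1 + 1; omega)]
        · intro j _ hj
          rw [if_neg]
          intro hc
          apply hj
          apply Fin.ext
          show (j : ℕ) = (i : ℕ) - 1
          omega
        · intro hmem
          exact absurd (Finset.mem_univ _) hmem
      · rw [dif_neg h]
        refine Finset.sum_eq_zero fun j _ => ?_
        rw [if_neg]
        omega
    have hQ2 : x ⬝ᵥ (κ *ᵥ x) = (∑ i : Fin (d + 1), T i i) +
        ((∑ i : Fin (d + 1), if _h : (i : ℕ) < d then T i ⟨(i : ℕ) + 1, by omega⟩ else 0) +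
          (∑ i : Fin (d + 1), if _h : 0 < (i : ℕ) then T i ⟨(i : ℕ) - 1, by omega⟩ else 0)) := by
      rw [hQ, ← Finset.sum_add_distrib, ← Finset.sum_add_distrib]
      refine Finset.sum_congr rfl fun i _ => ?_
      calc (∑ j, T i j) = ∑ j : Fin (d + 1), ((if j = i then T i j else 0) +
            ((if (j : ℕ) = (i : ℕ) + 1 then T i j else 0) +
              (if (i : ℕ) = (j : ℕ) + 1 then T i j else 0))) :=
            Finset.sum_congr rfl fun j _ => hsplit i j
        _ = _ := by
            rw [Finset.sum_add_distrib, Finset.sum_add_distrib, hinner1, hinner2, hinner3]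
    have hsum1 : (∑ i : Fin (d + 1), T i i)
        = (∑ k ∈ Finset.range d, u k ⬝ᵥ ((S k + (W k)ᵀ * S (k + 1) * W k) *ᵥ u k))
          + u d ⬝ᵥ (S d *ᵥ u d) := by
      have e1 : (∑ i : Fin (d + 1), T i i)
          = ∑ k ∈ Finset.range (d + 1), (if h : k < d + 1 then T ⟨k, h⟩ ⟨k, h⟩ else 0) := by
        rw [← Fin.sum_univ_eq_sum_range]
        exact Finset.sum_congr rfl fun i _ => by rw [dif_pos i.isLt]
      rw [e1, Finset.sum_range_succ, dif_pos hd1, hTlast]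
      congr 1
      refine Finset.sum_congr rfl fun k hk => ?_
      have hk' : k < d := Finset.mem_range.mp hk
      rw [dif_pos (by omega : k < d + 1), hTdiag k hk']
    have hsum2 : (∑ i : Fin (d + 1),
          if _h : (i : ℕ) < d then T i ⟨(i : ℕ) + 1, by omega⟩ else 0)
        = ∑ k ∈ Finset.range d, u k ⬝ᵥ ((-(S (k + 1) * W k))ᵀ *ᵥ u (k + 1)) := by
      have e1 : (∑ i : Fin (d + 1),
            if _h : (i : ℕ) < d then T i ⟨(i : ℕ) + 1, by omega⟩ else 0)
          = ∑ k ∈ Finset.range (d + 1),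
              (if h : k < d then T ⟨k, by omega⟩ ⟨k + 1, by omega⟩ else 0) := by
        rw [← Fin.sum_univ_eq_sum_range
          (fun k => if h : k < d then T ⟨k, by omega⟩ ⟨k + 1, by omega⟩ else 0)]
      rw [e1, Finset.sum_range_succ, dif_neg (lt_irrefl d), add_zero]
      refine Finset.sum_congr rfl fun k hk => ?_
      have hk' : k < d := Finset.mem_range.mp hk
      rw [dif_pos hk', hTup k hk']
    have hsum3 : (∑ i : Fin (d + 1),
          if _h : 0 < (i : ℕ) then T i ⟨(i : ℕ) - 1, by omega⟩ else 0)
        = ∑ k ∈ Finset.range d, u (k + 1) ⬝ᵥ ((-(S (k + 1) * W k)) *ᵥ u k) := by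
      have e1 : (∑ i : Fin (d + 1),
            if _h : 0 < (i : ℕ) then T i ⟨(i : ℕ) - 1, by omega⟩ else 0)
          = ∑ k ∈ Finset.range (d + 1),
              (if h : 0 < k ∧ k < d + 1 then T ⟨k, h.2⟩ ⟨k - 1, by omega⟩ else 0) := by
        rw [← Fin.sum_univ_eq_sum_range
          (fun k => if h : 0 < k ∧ k < d + 1 then T ⟨k, h.2⟩ ⟨k - 1, by omega⟩ else 0)]
        refine Finset.sum_congr rfl fun i _ => ?_
        by_cases h : 0 < (i : ℕ)
        · rw [dif_pos h, dif_pos ⟨h, i.isLt⟩]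
        · rw [dif_neg h, dif_neg (by omega)]
      rw [e1, Finset.sum_range_succ']
      have h0 : (if h : 0 < 0 ∧ 0 < d + 1 then
          T ⟨0, h.2⟩ ⟨0 - 1, by omega⟩ else 0) = 0 := by
        rw [dif_neg (by omega)]
      rw [h0, add_zero]
      refine Finset.sum_congr rfl fun k hk => ?_
      have hk' : k < d := Finset.mem_range.mp hk
      rw [dif_pos ⟨Nat.succ_pos k, by omega⟩]
      have e2 : (⟨k + 1 - 1, by omega⟩ : Fin (d + 1)) = ⟨k, by omega⟩ :=
        Fin.ext (by show k + 1 - 1 = k; omega)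
      rw [e2, hTlow k hk']
    have hQ3 : x ⬝ᵥ (κ *ᵥ x) = u 0 ⬝ᵥ (S 0 *ᵥ u 0) +
        ∑ k ∈ Finset.range d,
          ((u (k + 1) - W k *ᵥ u k) ⬝ᵥ (S (k + 1) *ᵥ (u (k + 1) - W k *ᵥ u k))) := by
      rw [hQ2, hsum1, hsum2, hsum3]
      have hsplitD : ∀ k, u k ⬝ᵥ ((S k + (W k)ᵀ * S (k + 1) * W k) *ᵥ u k)
          = u k ⬝ᵥ (S k *ᵥ u k) + u k ⬝ᵥ (((W k)ᵀ * S (k + 1) * W k) *ᵥ u k) := by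
        intro k
        rw [add_mulVec, dotProduct_add]
      rw [Finset.sum_congr rfl fun k _ => hsplitD k, Finset.sum_add_distrib]
      have hshift : (∑ k ∈ Finset.range d, u k ⬝ᵥ (S k *ᵥ u k)) + u d ⬝ᵥ (S d *ᵥ u d)
          = u 0 ⬝ᵥ (S 0 *ᵥ u 0) + ∑ k ∈ Finset.range d, u (k + 1) ⬝ᵥ (S (k + 1) *ᵥ u (k + 1)) := by
        rw [← Finset.sum_range_succ (fun k => u k ⬝ᵥ (S k *ᵥ u k)) d,
          Finset.sum_range_succ' (fun k => u k ⬝ᵥ (S k *ᵥ u k)) d]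
        ring
      have hterm : ∀ k ∈ Finset.range d,
          (u (k + 1) - W k *ᵥ u k) ⬝ᵥ (S (k + 1) *ᵥ (u (k + 1) - W k *ᵥ u k))
          = u (k + 1) ⬝ᵥ (S (k + 1) *ᵥ u (k + 1))
            + u k ⬝ᵥ (((W k)ᵀ * S (k + 1) * W k) *ᵥ u k)
            + (u k ⬝ᵥ ((-(S (k + 1) * W k))ᵀ *ᵥ u (k + 1))
              + u (k + 1) ⬝ᵥ ((-(S (k + 1) * W k)) *ᵥ u k)) := by
        intro k hk
        have hk' : k < d := Finset.mem_range.mp hk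
        exact (key_term' (S (k + 1)) (hSsymm (k + 1) (by omega)) (W k)
          (u k) (u (k + 1))).symm
      rw [Finset.sum_congr rfl hterm]
      simp only [Finset.sum_add_distrib]
      linarith [hshift]
    -- endgame: positivity
    have hnn : ∀ k, k ≤ d → ∀ v : Fin (n k) → ℝ, 0 ≤ v ⬝ᵥ (S k *ᵥ v) := by
      intro k hk v
      simpa using (hS k hk).posSemidef.dotProduct_mulVec_nonneg v
    have hpos : ∀ k, k ≤ d → ∀ v : Fin (n k) → ℝ, v ≠ 0 → 0 < v ⬝ᵥ (S k *ᵥ v) := by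
      intro k hk v hv
      simpa using (hS k hk).dotProduct_mulVec_pos hv
    have hex : ∃ k, u k ≠ 0 := by
      obtain ⟨⟨i, a⟩, hp⟩ := Function.ne_iff.mp hx
      refine ⟨(i : ℕ), fun h0 => hp ?_⟩
      show x ⟨i, a⟩ = 0
      rw [hxu i a, h0]
      rfl
    set k0 := Nat.find hex with hk0def
    have hk0ne : u k0 ≠ 0 := Nat.find_spec hex
    have hk0le : k0 ≤ d := by
      by_contra hgt
      apply hk0ne
      simp only [hu]
      rw [dif_neg (by omega : ¬ k0 < d + 1)]
    rw [hQ3]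
    have hsumnn : ∀ k ∈ Finset.range d,
        0 ≤ (u (k + 1) - W k *ᵥ u k) ⬝ᵥ (S (k + 1) *ᵥ (u (k + 1) - W k *ᵥ u k)) := by
      intro k hk
      have := Finset.mem_range.mp hk
      exact hnn (k + 1) (by omega) _
    rcases Nat.eq_zero_or_pos k0 with h0 | h0
    · have hu0 : u 0 ≠ 0 := h0 ▸ hk0ne
      exact add_pos_of_pos_of_nonneg (hpos 0 (by omega) _ hu0)
        (Finset.sum_nonneg hsumnn)
    · obtain ⟨m, hm⟩ : ∃ m, k0 = m + 1 := ⟨k0 - 1, by omega⟩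
      have hum : u m = 0 := not_not.mp (Nat.find_min hex (by omega))
      have hmlt : m ∈ Finset.range d := Finset.mem_range.mpr (by omega)
      have hrm : u (m + 1) - W m *ᵥ u m ≠ 0 := by
        rw [hum, mulVec_zero, sub_zero, ← hm]
        exact hk0ne
      refine add_pos_of_nonneg_of_pos (hnn 0 (by omega) _) ?_
      exact Finset.sum_pos' hsumnn ⟨m, hmlt, hpos (m + 1) (by omega) _ hrm⟩
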